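/- Let k > 0 and let A ⊆ [0,1] be a Borel measurable set with Lebesgue measure |A|. Then ∫_{A×A} G_k(z, z') dz dz' ≤ (2 |A| / k) · min(|A|, 1/k). -/

import Mathlib

open MeasureTheory

/-- The Green's function of `−d²/dz² + k²` on `[0,1]` with vanishing Dirichlet
boundary conditions. -/
noncomputable def Gk (k z z' : ℝ) : ℝ :=
  (1 / (k * Real.sinh k)) * Real.sinh (k * min z z') * Real.sinh (k * (1 - max z z'))

lemma core_sinh {k a b : ℝ} (ha : 0 ≤ a) (hb : 0 ≤ b) (hab : a + b ≤ k) :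
    Real.sinh a * Real.sinh b ≤ Real.sinh k / 2 * Real.exp (a + b - k) := by
  have e1 : Real.exp (-a + -b) ≤ Real.exp (a + -b) := Real.exp_le_exp.2 (by linarith)
  have e2 : Real.exp (a + b - 2*k) ≤ Real.exp (-a + b) := Real.exp_le_exp.2 (by linarith)
  have h1 := Real.exp_add a b
  have h2 := Real.exp_add a (-b)
  have h3 := Real.exp_add (-a) b
  have h4 := Real.exp_add (-a) (-b)
  have h5 : Real.exp k * Real.exp (a+b-k) = Real.exp (a+b) := by
    rw [← Real.exp_add]; ring_nf
  have h6 : Real.exp (-k) * Real.exp (a+b-k) = Real.exp (a+b-2*k) := by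
    rw [← Real.exp_add]; ring_nf
  rw [Real.sinh_eq, Real.sinh_eq, Real.sinh_eq]
  nlinarith [e1, e2, h1, h2, h3, h4, h5, h6]

lemma gk_bound {k : ℝ} (hk : 0 < k) {z z' : ℝ} (hz : z ∈ Set.Icc (0:ℝ) 1)
    (hz' : z' ∈ Set.Icc (0:ℝ) 1) :
    Gk k z z' ≤ 1/(2*k) * Real.exp (-(k * |z - z'|)) := by
  obtain ⟨hz0, hz1⟩ := hz
  obtain ⟨hz0', hz1'⟩ := hz'
  have hs : 0 < Real.sinh k := Real.sinh_pos_iff.2 hk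
  set m := min z z' with hm
  set M := max z z' with hM
  have hm0 : 0 ≤ m := le_min hz0 hz0'
  have hM1 : M ≤ 1 := max_le hz1 hz1'
  have hmM : m ≤ M := min_le_max
  have habs : |z - z'| = M - m := by
    rw [abs_sub_comm]; exact (max_sub_min_eq_abs z z').symm
  have key := core_sinh (k := k) (a := k*m) (b := k*(1-M))
    (by positivity) (by nlinarith) (by nlinarith)
  have harg : k*m + k*(1-M) - k = -(k*(M-m)) := by ring
  rw [harg] at key
  have hGk : Gk k z z' = (Real.sinh (k*m) * Real.sinh (k*(1-M))) / (k * Real.sinh k) := by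
    unfold Gk; ring
  rw [hGk, habs, div_le_iff₀ (by positivity)]
  have heq : 1/(2*k) * Real.exp (-(k*(M-m))) * (k * Real.sinh k)
      = Real.sinh k / 2 * Real.exp (-(k*(M-m))) := by
    field_simp
  rw [heq]; exact key

lemma gk_nonneg {k : ℝ} (hk : 0 < k) {z z' : ℝ} (hz : z ∈ Set.Icc (0:ℝ) 1)
    (hz' : z' ∈ Set.Icc (0:ℝ) 1) : 0 ≤ Gk k z z' := by
  obtain ⟨hz0, hz1⟩ := hz
  obtain ⟨hz0', hz1'⟩ := hz'
  have hs : 0 < Real.sinh k := Real.sinh_pos_iff.2 hk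
  have h1 : 0 ≤ Real.sinh (k * min z z') := Real.sinh_nonneg_iff.2 (by positivity)
  have h2 : 0 ≤ Real.sinh (k * (1 - max z z')) := by
    apply Real.sinh_nonneg_iff.2
    have h : max z z' ≤ 1 := max_le hz1 hz1'
    nlinarith
  unfold Gk
  positivity

lemma gk_cont (k z : ℝ) : Continuous (fun z' => Gk k z z') := by
  unfold Gk; fun_prop

lemma exp_cont (k z : ℝ) : Continuous (fun x : ℝ => Real.exp (-(k * |z - x|))) := by
  fun_prop

lemma exp_half_int {k : ℝ} (hk : 0 < k) (c : ℝ) :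
    ∫ x in (c-1)..c, Real.exp (k*x - k*c) = (1 - Real.exp (-k))/k := by
  have hderiv : ∀ x ∈ Set.uIcc (c-1) c,
      HasDerivAt (fun x => Real.exp (k*x - k*c)/k) (Real.exp (k*x - k*c)) x := by
    intro x _
    have h1 : HasDerivAt (fun x : ℝ => k*x - k*c) k x := by
      simpa using ((hasDerivAt_id x).const_mul k).sub_const (k*c)
    have h2 := (h1.exp).div_const k
    rw [mul_div_cancel_right₀ _ hk.ne'] at h2
    exact h2
  rw [intervalIntegral.integral_eq_sub_of_hasDerivAt hderiv
    ((by fun_prop : Continuous (fun x : ℝ => Real.exp (k*x - k*c))).intervalIntegrable _ _)]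
  have : k*(c-1) - k*c = -k := by ring
  rw [this]
  have : k*c - k*c = 0 := by ring
  rw [this, Real.exp_zero]
  ring

lemma exp_int {k : ℝ} (hk : 0 < k) {z : ℝ} (hz : z ∈ Set.Icc (0:ℝ) 1) {A : Set ℝ}
    (hA : MeasurableSet A) (hA1 : A ⊆ Set.Icc 0 1) :
    ∫ x in A, Real.exp (-(k * |z - x|)) ≤ 2/k := by
  obtain ⟨hz0, hz1⟩ := hz
  set f := fun x : ℝ => Real.exp (-(k * |z - x|)) with hf
  have hfc : Continuous f := exp_cont k z
  have hfnn : ∀ x, 0 ≤ f x := fun x => (Real.exp_pos _).le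
  have hIl : IntegrableOn f (Set.Icc (z-1) z) := hfc.integrableOn_Icc
  have hIr : IntegrableOn f (Set.Icc z (z+1)) := hfc.integrableOn_Icc
  have hsub1 : A ∩ Set.Iic z ⊆ Set.Icc (z-1) z := by
    rintro x ⟨hxA, hxz⟩
    have := hA1 hxA
    exact ⟨by linarith [this.1], hxz⟩
  have hsub2 : A ∩ Set.Ioi z ⊆ Set.Icc z (z+1) := by
    rintro x ⟨hxA, hxz⟩
    have := hA1 hxA
    exact ⟨le_of_lt hxz, by linarith [this.2]⟩
  have hU : A = (A ∩ Set.Iic z) ∪ (A ∩ Set.Ioi z) := by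
    rw [← Set.inter_union_distrib_left, Set.Iic_union_Ioi, Set.inter_univ]
  have hsplit : ∫ x in A, f x = (∫ x in A ∩ Set.Iic z, f x) + ∫ x in A ∩ Set.Ioi z, f x := by
    conv_lhs => rw [hU]
    exact setIntegral_union (Set.disjoint_left.2 (by rintro x ⟨_, h1⟩ ⟨_, h2⟩; exact absurd h2 (by simp; exact h1)))
      (hA.inter measurableSet_Ioi) (hIl.mono_set hsub1) (hIr.mono_set hsub2)
  have h1 : (∫ x in A ∩ Set.Iic z, f x) ≤ ∫ x in Set.Icc (z-1) z, f x :=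
    setIntegral_mono_set hIl (Filter.Eventually.of_forall fun x => hfnn x)
      (Filter.Eventually.of_forall hsub1)
  have h2 : (∫ x in A ∩ Set.Ioi z, f x) ≤ ∫ x in Set.Icc z (z+1), f x :=
    setIntegral_mono_set hIr (Filter.Eventually.of_forall fun x => hfnn x)
      (Filter.Eventually.of_forall hsub2)
  have hv1 : (∫ x in Set.Icc (z-1) z, f x) = (1 - Real.exp (-k))/k := by
    rw [setIntegral_congr_fun measurableSet_Icc (g := fun x => Real.exp (k*x - k*z))
      (fun x hx => by
        simp only [hf]
        congr 1
        rw [abs_of_nonneg (by linarith [hx.2])]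
        ring)]
    rw [MeasureTheory.integral_Icc_eq_integral_Ioc,
      ← intervalIntegral.integral_of_le (by linarith)]
    exact exp_half_int hk z
  have hv2 : (∫ x in Set.Icc z (z+1), f x) = (1 - Real.exp (-k))/k := by
    rw [setIntegral_congr_fun measurableSet_Icc (g := fun x => Real.exp (k*z - k*x))
      (fun x hx => by
        simp only [hf]
        congr 1
        rw [abs_of_nonpos (by linarith [hx.1])]
        ring)]
    rw [MeasureTheory.integral_Icc_eq_integral_Ioc,
      ← intervalIntegral.integral_of_le (by linarith)]
    have hderiv : ∀ x ∈ Set.uIcc z (z+1),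
        HasDerivAt (fun x => -Real.exp (k*z - k*x)/k) (Real.exp (k*z - k*x)) x := by
      intro x _
      have h1 : HasDerivAt (fun x : ℝ => k*z - k*x) (-k) x := by
        simpa using ((hasDerivAt_id x).const_mul k).const_sub (k*z)
      have h2 := ((h1.exp).div_const k).neg
      have h3 : (fun x => -Real.exp (k*z - k*x)/k) = -fun x => Real.exp (k*z - k*x)/k := by
        ext y; simp [neg_div]
      rw [h3]
      rw [mul_neg, neg_div, neg_neg, mul_div_cancel_right₀ _ hk.ne'] at h2
      exact h2
    rw [intervalIntegral.integral_eq_sub_of_hasDerivAt hderiv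
      ((by fun_prop : Continuous (fun x : ℝ => Real.exp (k*z - k*x))).intervalIntegrable _ _)]
    have e1 : k*z - k*(z+1) = -k := by ring
    have e2 : k*z - k*z = 0 := by ring
    rw [e1, e2, Real.exp_zero]
    ring
  have hle : (1 - Real.exp (-k))/k ≤ 1/k := by
    have := Real.exp_pos (-k)
    gcongr
    linarith
  calc ∫ x in A, f x = _ := hsplit
    _ ≤ (∫ x in Set.Icc (z-1) z, f x) + ∫ x in Set.Icc z (z+1), f x := add_le_add h1 h2
    _ = (1 - Real.exp (-k))/k + (1 - Real.exp (-k))/k := by rw [hv1, hv2]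
    _ ≤ 1/k + 1/k := add_le_add hle hle
    _ = 2/k := by ring

theorem stmt4 (k : ℝ) (hk : 0 < k) (A : Set ℝ)
    (hA : MeasurableSet A) (hA1 : A ⊆ Set.Icc 0 1) :
    ∫ z in A, ∫ z' in A, Gk k z z'
      ≤ 2 * (volume A).toReal / k * min (volume A).toReal (1 / k) := by
  set a := (volume A).toReal with ha
  have ha0 : 0 ≤ a := ENNReal.toReal_nonneg
  have hvfin : volume A < ⊤ := by
    refine lt_of_le_of_lt (measure_mono hA1) ?_
    rw [Real.volume_Icc]
    exact ENNReal.ofReal_lt_top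
  set F : ℝ → ℝ := fun z => ∫ z' in A, Gk k z z' with hF
  have hGint : ∀ z, IntegrableOn (fun z' => Gk k z z') A := fun z =>
    ((gk_cont k z).integrableOn_Icc (a := 0) (b := 1)).mono_set hA1
  have hexpint : ∀ z, IntegrableOn (fun x => 1/(2*k) * Real.exp (-(k*|z-x|))) A := fun z =>
    ((continuous_const.mul (exp_cont k z)).integrableOn_Icc (a := 0) (b := 1)).mono_set hA1
  have hFnn : ∀ z ∈ Set.Icc (0:ℝ) 1, 0 ≤ F z := fun z hz =>
    setIntegral_nonneg hA fun z' hz' => gk_nonneg hk hz (hA1 hz')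
  have hgle : ∀ z ∈ Set.Icc (0:ℝ) 1, ∀ z' ∈ A, Gk k z z' ≤ 1/(2*k) := by
    intro z hz z' hz'
    calc Gk k z z' ≤ 1/(2*k) * Real.exp (-(k * |z - z'|)) := gk_bound hk hz (hA1 hz')
      _ ≤ 1/(2*k) * 1 := by
          apply mul_le_mul_of_nonneg_left _ (by positivity : (0:ℝ) ≤ 1/(2*k))
          exact Real.exp_le_one_iff.2 (neg_nonpos.2 (by positivity))
      _ = 1/(2*k) := mul_one _
  have hFle1 : ∀ z ∈ A, F z ≤ 1/(2*k) * a := by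
    intro z hz
    calc F z ≤ ‖F z‖ := le_abs_self _
      _ ≤ 1/(2*k) * a :=
        norm_setIntegral_le_of_norm_le_const hvfin fun z' hz' => by
          rw [Real.norm_eq_abs, abs_of_nonneg (gk_nonneg hk (hA1 hz) (hA1 hz'))]
          exact hgle z (hA1 hz) z' hz'
  have hFle2 : ∀ z ∈ A, F z ≤ 1/k^2 := by
    intro z hz
    calc F z ≤ ∫ z' in A, 1/(2*k) * Real.exp (-(k*|z-z'|)) :=
        setIntegral_mono_on (hGint z) (hexpint z) hA
          (fun z' hz' => gk_bound hk (hA1 hz) (hA1 hz'))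
      _ = 1/(2*k) * ∫ z' in A, Real.exp (-(k*|z-z'|)) := integral_const_mul _ _
      _ ≤ 1/(2*k) * (2/k) :=
        mul_le_mul_of_nonneg_left (exp_int hk (hA1 hz) hA hA1) (by positivity)
      _ = 1/k^2 := by field_simp
  have hC : ∀ z ∈ A, ‖F z‖ ≤ 2/k * min a (1/k) := by
    intro z hz
    rw [Real.norm_eq_abs, abs_of_nonneg (hFnn z (hA1 hz))]
    rcases le_total a (1/k) with h | h
    · rw [min_eq_left h]
      have h1 := hFle1 z hz
      have h2 : 1/(2*k) * a ≤ 2/k * a := by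
        apply mul_le_mul_of_nonneg_right _ ha0
        rw [div_le_div_iff₀ (by positivity) (by positivity)]
        nlinarith
      linarith
    · rw [min_eq_right h]
      have h1 := hFle2 z hz
      have h2 : 1/k^2 ≤ 2/k * (1/k) := by
        rw [div_mul_div_comm, mul_one]
        rw [div_le_div_iff₀ (by positivity) (by positivity)]
        nlinarith
      linarith
  calc ∫ z in A, F z ≤ ‖∫ z in A, F z‖ := le_abs_self _
    _ ≤ 2/k * min a (1/k) * a := norm_setIntegral_le_of_norm_le_const hvfin hC
    _ = 2 * a / k * min a (1/k) := by ring
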